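/- arXiv:2111.14244 — 3 statements merged into one kernel-verified Lean document; each statement's English description precedes it below -/
import Mathlib

section
/- Let n ≥ 1 be an integer and let x1, x2, y1, y2 be real numbers with x1 < y1 and y2 < x2. Then |x1 − y2|^n + |y1 − x2|^n ≤ |x1 − x2|^n + |y1 − y2|^n. -/
theorem swapping_inequality (n : ℕ) (hn : 1 ≤ n) (x1 x2 y1 y2 : ℝ)
    (hxy : x1 < y1) (hyx : y2 < x2) :
    |x1 - y2| ^ n + |y1 - x2| ^ n ≤ |x1 - x2| ^ n + |y1 - y2| ^ n := by
  have hf : ConvexOn ℝ Set.univ (fun t : ℝ => |t| ^ n) := by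
    simpa [Real.norm_eq_abs, Pi.pow_def] using
      (convexOn_univ_norm (E := ℝ)).pow (fun x _ => norm_nonneg x) (n := n)
  set a := x1 - y2 with ha
  set b := y1 - x2 with hb
  set c := x1 - x2 with hc
  set d := y1 - y2 with hd
  have hca : c < a := by simp only [ha, hc]; linarith
  have had : a < d := by simp only [ha, hd]; linarith
  have hdc : (0:ℝ) < d - c := by linarith
  set lam := (d - a) / (d - c) with hlam
  set mu := (a - c) / (d - c) with hmu
  have hl : 0 ≤ lam := div_nonneg (by linarith) hdc.le
  have hm : 0 ≤ mu := div_nonneg (by linarith) hdc.le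
  have hsum : lam + mu = 1 := by
    rw [hlam, hmu, ← add_div]
    field_simp
    ring
  have h1 := hf.2 (Set.mem_univ c) (Set.mem_univ d) hl hm hsum
  have h2 := hf.2 (Set.mem_univ d) (Set.mem_univ c) hl hm hsum
  have e1 : lam • c + mu • d = a := by
    rw [smul_eq_mul, smul_eq_mul, hlam, hmu]
    field_simp
    ring
  have e2 : lam • d + mu • c = b := by
    rw [smul_eq_mul, smul_eq_mul, hlam, hmu, hb]
    field_simp
    ring
  rw [e1] at h1
  rw [e2] at h2
  simp only [smul_eq_mul] at h1 h2
  nlinarith [h1, h2, abs_nonneg c, abs_nonneg d, pow_nonneg (abs_nonneg c) n,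
    pow_nonneg (abs_nonneg d) n]
end

section
/- Let p and q be probability measures on ℝ with finite n-th moments, for an integer n ≥ 1. Let P and Q be their cumulative distribution functions and let P⁻¹, Q⁻¹ be the corresponding quantile functions. Then W_n(p,q)^n = ∫₀¹ |P⁻¹(t) − Q⁻¹(t)|^n dt, i.e. the n-th Wasserstein distance between p and q equals (∫₀¹ |P⁻¹(t) − Q⁻¹(t)|^n dt)^{1/n}. -/
open MeasureTheory ProbabilityTheory Set Filter Topology
open scoped ENNReal

set_option linter.unusedSectionVars false
set_option linter.unusedVariables false

/-- The set of couplings of two measures: measures on the product space whose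
first and second marginals are `p` and `q` respectively. -/
def couplings {α β : Type*} [MeasurableSpace α] [MeasurableSpace β]
    (p : Measure α) (q : Measure β) : Set (Measure (α × β)) :=
  {ν | ν.map Prod.fst = p ∧ ν.map Prod.snd = q}

/-- The quantile function (generalized inverse CDF) of a measure on `ℝ`. -/
noncomputable def quantile (p : Measure ℝ) (t : ℝ) : ℝ :=
  sInf {x : ℝ | t ≤ cdf p x}

section Aux

variable (p : Measure ℝ) [IsProbabilityMeasure p]

lemma quantile_set_nonempty {t : ℝ} (ht : t < 1) : {x : ℝ | t ≤ cdf p x}.Nonempty := by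
  obtain ⟨x, hx⟩ := ((tendsto_cdf_atTop p).eventually (eventually_gt_nhds ht)).exists
  exact ⟨x, hx.le⟩

lemma quantile_bddBelow {t : ℝ} (ht : 0 < t) : BddBelow {x : ℝ | t ≤ cdf p x} := by
  obtain ⟨x₀, hx₀⟩ := ((tendsto_cdf_atBot p).eventually (eventually_lt_nhds ht)).exists
  exact ⟨x₀, fun y hy => le_of_not_gt fun h =>
    (((monotone_cdf p) h.le).trans_lt hx₀).not_ge hy⟩

lemma le_cdf_quantile {t : ℝ} (ht : t ∈ Ioo (0:ℝ) 1) : t ≤ cdf p (quantile p t) := by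
  have hne := quantile_set_nonempty p ht.2
  have hbdd := quantile_bddBelow p ht.1
  have key : ∀ x, quantile p t < x → t ≤ cdf p x := by
    intro x hx
    obtain ⟨y, hy, hyx⟩ := (csInf_lt_iff hbdd hne).1 hx
    exact hy.trans (monotone_cdf p hyx.le)
  have hrc := (cdf p).right_continuous (quantile p t)
  refine ge_of_tendsto (hrc.mono_left (nhdsWithin_mono _ Ioi_subset_Ici_self)) ?_
  exact eventually_nhdsWithin_of_forall fun x hx => key x hx

lemma quantile_le_iff {t : ℝ} (ht : t ∈ Ioo (0:ℝ) 1) {x : ℝ} :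
    quantile p t ≤ x ↔ t ≤ cdf p x := by
  constructor
  · intro h; exact (le_cdf_quantile p ht).trans (monotone_cdf p h)
  · intro h; exact csInf_le (quantile_bddBelow p ht.1) h

lemma lt_quantile_iff {t : ℝ} (ht : t ∈ Ioo (0:ℝ) 1) {x : ℝ} :
    x < quantile p t ↔ cdf p x < t := by
  rw [← not_le, ← not_le]
  exact not_congr (quantile_le_iff p ht)

noncomputable def qf (p : Measure ℝ) (t : ℝ) : ℝ :=
  if t ∈ Ioo (0:ℝ) 1 then quantile p t else 0

lemma measurable_qf : Measurable (qf p) := by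
  apply measurable_of_Iic
  intro x
  have : qf p ⁻¹' Iic x
      = (Ioo (0:ℝ) 1 ∩ Iic (cdf p x)) ∪ ((Ioo (0:ℝ) 1)ᶜ ∩ {t : ℝ | (0:ℝ) ≤ x}) := by
    ext t
    by_cases h : t ∈ Ioo (0:ℝ) 1
    · simp [qf, h, quantile_le_iff p h]
    · simp [qf, h]
  rw [this]
  exact (measurableSet_Ioo.inter measurableSet_Iic).union
    (measurableSet_Ioo.compl.inter (MeasurableSet.const _))

lemma volume_Ioo_inter_Ioc {a b : ℝ} (ha : 0 ≤ a) (hb : b ≤ 1) :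
    volume (Ioo (0:ℝ) 1 ∩ Ioc a b) = ENNReal.ofReal (b - a) := by
  rcases le_or_gt b a with h | h
  · rw [Ioc_eq_empty (not_lt.2 h), inter_empty, measure_empty, Eq.comm,
      ENNReal.ofReal_eq_zero]
    linarith
  · refine le_antisymm ?_ ?_
    · calc volume (Ioo (0:ℝ) 1 ∩ Ioc a b) ≤ volume (Ioc a b) :=
            measure_mono inter_subset_right
        _ = ENNReal.ofReal (b - a) := Real.volume_Ioc
    · calc ENNReal.ofReal (b - a) = volume (Ioo a b) := Real.volume_Ioo.symm
        _ ≤ _ := measure_mono (by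
            intro u hu
            exact ⟨⟨ha.trans_lt hu.1, hu.2.trans_le hb⟩, hu.1, hu.2.le⟩)

lemma volume_Ioo_inter_Iic {c : ℝ} (h0 : 0 ≤ c) (h1 : c ≤ 1) :
    volume (Ioo (0:ℝ) 1 ∩ Iic c) = ENNReal.ofReal c := by
  have : Ioo (0:ℝ) 1 ∩ Iic c = Ioo (0:ℝ) 1 ∩ Ioc 0 c := by
    ext u
    exact ⟨fun hu => ⟨hu.1, hu.1.1, hu.2⟩, fun hu => ⟨hu.1, hu.2.2⟩⟩
  rw [this, volume_Ioo_inter_Ioc le_rfl h1, sub_zero]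

lemma map_qf : Measure.map (qf p) (volume.restrict (Ioo 0 1)) = p := by
  have hfin : IsFiniteMeasure (Measure.map (qf p) (volume.restrict (Ioo 0 1))) := by
    constructor
    rw [Measure.map_apply (measurable_qf p) MeasurableSet.univ]
    simp
  refine Measure.ext_of_Iic _ _ fun x => ?_
  rw [Measure.map_apply (measurable_qf p) measurableSet_Iic,
    Measure.restrict_apply ((measurable_qf p) measurableSet_Iic)]
  have : qf p ⁻¹' Iic x ∩ Ioo 0 1 = Ioo (0:ℝ) 1 ∩ Iic (cdf p x) := by
    ext t
    constructor
    · rintro ⟨h1, h2⟩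
      refine ⟨h2, ?_⟩
      simpa [qf, h2, quantile_le_iff p h2] using h1
    · rintro ⟨h2, h1⟩
      refine ⟨?_, h2⟩
      simpa [qf, h2, quantile_le_iff p h2] using h1
  rw [this, volume_Ioo_inter_Iic (cdf_nonneg p x) (cdf_le_one p x), ofReal_cdf]

end Aux


def cset (x y : ℝ) : Set (ℝ × ℝ) :=
  {st | (y ≤ st.1 ∧ st.2 < x) ∨ (x ≤ st.1 ∧ st.2 < y)}

lemma measurableSet_cset (x y : ℝ) : MeasurableSet (cset x y) :=
  ((measurableSet_le measurable_const measurable_fst).inter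
      (measurableSet_lt measurable_snd measurable_const)).union
    ((measurableSet_le measurable_const measurable_fst).inter
      (measurableSet_lt measurable_snd measurable_const))

lemma cset_comm (x y : ℝ) : cset x y = cset y x := by
  ext st; exact or_comm

noncomputable def wkerD (n : ℕ) (st : ℝ × ℝ) : ℝ≥0∞ :=
  if st.1 ≤ st.2 then
    ENNReal.ofReal ((n : ℝ) * ((n : ℝ) - 1) * (st.2 - st.1) ^ (n - 2)) else 0

lemma measurable_wkerD (n : ℕ) : Measurable (wkerD n) := by
  unfold wkerD
  exact Measurable.ite (measurableSet_le measurable_fst measurable_snd)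
    (ENNReal.measurable_ofReal.comp
      ((measurable_const.mul ((measurable_snd.sub measurable_fst).pow_const _))))
    measurable_const

noncomputable def wker (n : ℕ) : Measure (ℝ × ℝ) :=
  if n = 1 then Measure.map (fun s : ℝ => (s, s)) volume
  else (volume.prod volume).withDensity (wkerD n)

instance (n : ℕ) : SFinite (wker n) := by
  unfold wker; split_ifs <;> infer_instance

lemma wker_ae_le (n : ℕ) : ∀ᵐ st ∂(wker n), st.1 ≤ st.2 := by
  rw [ae_iff]
  have hms : MeasurableSet {st : ℝ × ℝ | ¬ st.1 ≤ st.2} :=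
    (measurableSet_le measurable_fst measurable_snd).compl
  unfold wker
  split_ifs
  · rw [Measure.map_apply
      (by fun_prop : Measurable fun s : ℝ => (s, s)) hms]
    have : (fun s : ℝ => (s, s)) ⁻¹' {st : ℝ × ℝ | ¬ st.1 ≤ st.2} = ∅ := by
      ext s; simp
    rw [this, measure_empty]
  · rw [withDensity_apply _ hms]
    calc ∫⁻ st in {st : ℝ × ℝ | ¬ st.1 ≤ st.2}, wkerD n st
        = ∫⁻ _ in {st : ℝ × ℝ | ¬ st.1 ≤ st.2}, 0 :=
          setLIntegral_congr_fun hms (fun st hst => if_neg hst)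
      _ = 0 := lintegral_zero

lemma lintegral_Ico_pow_sub_right {a b : ℝ} (hab : a ≤ b) (k : ℕ) :
    ∫⁻ t in Ico a b, ENNReal.ofReal ((t - a) ^ k)
      = ENNReal.ofReal ((b - a) ^ (k + 1) / (k + 1)) := by
  rw [Measure.restrict_congr_set Ico_ae_eq_Ioc, ← ofReal_integral_eq_lintegral_ofReal]
  · rw [← intervalIntegral.integral_of_le hab,
      intervalIntegral.integral_comp_sub_right (fun x => x ^ k) a, integral_pow]
    norm_num
  · exact (Continuous.integrableOn_Ioc (by continuity))
  · exact (ae_restrict_mem measurableSet_Ioc).mono fun t ht =>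
      pow_nonneg (by linarith [ht.1]) k

lemma lintegral_Ico_pow_sub_left {a b : ℝ} (hab : a ≤ b) (k : ℕ) :
    ∫⁻ t in Ico a b, ENNReal.ofReal ((b - t) ^ k)
      = ENNReal.ofReal ((b - a) ^ (k + 1) / (k + 1)) := by
  rw [Measure.restrict_congr_set Ico_ae_eq_Ioc, ← ofReal_integral_eq_lintegral_ofReal]
  · rw [← intervalIntegral.integral_of_le hab,
      intervalIntegral.integral_comp_sub_left (fun x => x ^ k) b, integral_pow]
    rw [sub_self]
    norm_num
  · exact (Continuous.integrableOn_Ioc (by continuity))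
  · exact (ae_restrict_mem measurableSet_Ioc).mono fun t ht =>
      pow_nonneg (by linarith [ht.2]) k

lemma wker_apply_of_le (n : ℕ) (hn : 1 ≤ n) {x y : ℝ} (hyx : y ≤ x) :
    wker n (cset x y) = ENNReal.ofReal ((x - y) ^ n) := by
  unfold wker
  split_ifs with h1
  · subst h1
    rw [Measure.map_apply
      (by fun_prop : Measurable fun s : ℝ => (s, s))
      (measurableSet_cset x y)]
    have : (fun s : ℝ => (s, s)) ⁻¹' cset x y = Ico y x := by
      ext s
      simp only [mem_preimage, cset, mem_setOf_eq, mem_Ico]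
      constructor
      · rintro (⟨h1, h2⟩ | ⟨h1, h2⟩)
        · exact ⟨h1, h2⟩
        · exfalso; linarith
      · exact fun h => Or.inl h
    rw [this, Real.volume_Ico, pow_one]
  · obtain ⟨k, rfl⟩ : ∃ k, n = k + 2 := ⟨n - 2, by omega⟩
    rw [withDensity_apply _ (measurableSet_cset x y),
      ← lintegral_indicator (measurableSet_cset x y),
      lintegral_prod _ (((measurable_wkerD _).indicator (measurableSet_cset x y)).aemeasurable)]
    have hC : (0:ℝ) ≤ ((k:ℝ) + 2) * ((k:ℝ) + 1) := by positivity
    have inner : ∀ s : ℝ,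
        (∫⁻ t, (cset x y).indicator (wkerD (k + 2)) (s, t))
          = (Ico y x).indicator
              (fun s => ENNReal.ofReal (((k:ℝ) + 2) * (x - s) ^ (k + 1))) s := by
      intro s
      by_cases hy : y ≤ s
      · have hfun : (fun t => (cset x y).indicator (wkerD (k + 2)) (s, t))
            = (Ico s x).indicator
                (fun t => ENNReal.ofReal (((k:ℝ) + 2) * ((k:ℝ) + 1) * (t - s) ^ k)) := by
          funext t
          by_cases h2 : s ≤ t <;> by_cases h3 : t < x
          · rw [indicator_of_mem (show (s, t) ∈ cset x y from Or.inl ⟨hy, h3⟩),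
              indicator_of_mem (show t ∈ Ico s x from ⟨h2, h3⟩)]
            have : wkerD (k + 2) (s, t)
                = ENNReal.ofReal (((k:ℝ) + 2) * (((k:ℝ) + 2) - 1) * (t - s) ^ (k + 2 - 2)) := by
              simp only [wkerD]
              rw [if_pos (show ((s : ℝ), t).1 ≤ ((s : ℝ), t).2 from h2)]
              push_cast
              rfl
            rw [this]
            congr 1
            push_cast
            ring_nf
          · rw [indicator_of_notMem (show t ∉ Ico s x from fun h => h3 h.2),
              indicator_of_notMem]
            rintro (⟨_, h⟩ | ⟨h4, h5⟩)
            · exact h3 h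
            · exact absurd (h5.trans_le (hyx.trans h4)) (not_lt.2 h2)
          · rw [indicator_of_notMem (show t ∉ Ico s x from fun h => h2 h.1)]
            by_cases hm : (s, t) ∈ cset x y
            · rw [indicator_of_mem hm]
              simp only [wkerD]
              rw [if_neg (show ¬ ((s : ℝ), t).1 ≤ ((s : ℝ), t).2 from h2)]
            · rw [indicator_of_notMem hm]
          · rw [indicator_of_notMem (show t ∉ Ico s x from fun h => h2 h.1)]
            by_cases hm : (s, t) ∈ cset x y
            · rw [indicator_of_mem hm]
              simp only [wkerD]
              rw [if_neg (show ¬ ((s : ℝ), t).1 ≤ ((s : ℝ), t).2 from h2)]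
            · rw [indicator_of_notMem hm]
        rw [hfun, lintegral_indicator measurableSet_Ico]
        by_cases hsx : s < x
        · rw [indicator_of_mem (show s ∈ Ico y x from ⟨hy, hsx⟩)]
          calc ∫⁻ t in Ico s x,
                ENNReal.ofReal (((k:ℝ) + 2) * ((k:ℝ) + 1) * (t - s) ^ k)
              = ∫⁻ t in Ico s x,
                ENNReal.ofReal (((k:ℝ) + 2) * ((k:ℝ) + 1)) * ENNReal.ofReal ((t - s) ^ k) := by
                refine setLIntegral_congr_fun measurableSet_Ico (fun t ht => ?_)
                rw [← ENNReal.ofReal_mul hC]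
            _ = ENNReal.ofReal (((k:ℝ) + 2) * ((k:ℝ) + 1))
                  * ENNReal.ofReal ((x - s) ^ (k + 1) / (k + 1)) := by
                rw [lintegral_const_mul _ (by
                  exact ENNReal.measurable_ofReal.comp
                    ((measurable_id.sub measurable_const).pow_const _)),
                  lintegral_Ico_pow_sub_right hsx.le k]
            _ = ENNReal.ofReal (((k:ℝ) + 2) * (x - s) ^ (k + 1)) := by
                rw [← ENNReal.ofReal_mul hC]
                congr 1
                have : ((k:ℝ) + 1) ≠ 0 := by positivity
                field_simp
        · rw [indicator_of_notMem (fun h => hsx h.2), Ico_eq_empty (fun h => hsx h),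
            Measure.restrict_empty, lintegral_zero_measure]
      · have hfun : (fun t => (cset x y).indicator (wkerD (k + 2)) (s, t)) = fun _ => 0 := by
          funext t
          refine indicator_of_notMem ?_ _
          rintro (⟨h2, _⟩ | ⟨h2, _⟩)
          · exact hy h2
          · exact hy (hyx.trans h2)
        rw [hfun, lintegral_const, zero_mul, indicator_of_notMem (fun h => hy h.1)]
    rw [lintegral_congr inner, lintegral_indicator measurableSet_Ico]
    calc ∫⁻ s in Ico y x, ENNReal.ofReal (((k:ℝ) + 2) * (x - s) ^ (k + 1))
        = ∫⁻ s in Ico y x,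
            ENNReal.ofReal ((k:ℝ) + 2) * ENNReal.ofReal ((x - s) ^ (k + 1)) := by
          refine setLIntegral_congr_fun measurableSet_Ico (fun s hs => ?_)
          rw [← ENNReal.ofReal_mul (by positivity)]
      _ = ENNReal.ofReal ((k:ℝ) + 2) * ENNReal.ofReal ((x - y) ^ (k + 2) / (k + 2)) := by
          rw [lintegral_const_mul _ (by
            exact ENNReal.measurable_ofReal.comp
              ((measurable_const.sub measurable_id).pow_const _)),
            lintegral_Ico_pow_sub_left hyx (k + 1)]
          have : (x - y) ^ (k + 1 + 1) / ((k:ℝ) + 1 + 1) = (x - y) ^ (k + 2) / ((k:ℝ) + 2) := by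
            ring_nf
          rw [show ((k + 1 : ℕ) : ℝ) + 1 = (k : ℝ) + 1 + 1 by push_cast; ring, this]
      _ = ENNReal.ofReal ((x - y) ^ (k + 2)) := by
          rw [← ENNReal.ofReal_mul (by positivity)]
          congr 1
          have h0 : ((k:ℝ) + 2) ≠ 0 := by positivity
          field_simp

lemma wker_apply (n : ℕ) (hn : 1 ≤ n) (x y : ℝ) :
    wker n (cset x y) = ENNReal.ofReal (|x - y| ^ n) := by
  rcases le_total y x with h | h
  · rw [wker_apply_of_le n hn h, abs_of_nonneg (by linarith)]
  · rw [cset_comm, wker_apply_of_le n hn h, abs_sub_comm]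
    rw [abs_of_nonneg (by linarith)]

lemma measurableSet_csection (st : ℝ × ℝ) :
    MeasurableSet {z : ℝ × ℝ | st ∈ cset z.1 z.2} :=
  ((measurableSet_le measurable_snd measurable_const).inter
      (measurableSet_lt measurable_const measurable_fst)).union
    ((measurableSet_le measurable_fst measurable_const).inter
      (measurableSet_lt measurable_const measurable_snd))

lemma lintegral_wker_cset (n : ℕ) (m : Measure (ℝ × ℝ)) [IsFiniteMeasure m] :
    ∫⁻ z, wker n (cset z.1 z.2) ∂m
      = ∫⁻ st, m {z : ℝ × ℝ | st ∈ cset z.1 z.2} ∂(wker n) := by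
  have hbig : MeasurableSet {w : (ℝ × ℝ) × (ℝ × ℝ) | w.2 ∈ cset w.1.1 w.1.2} :=
    ((measurableSet_le measurable_fst.snd measurable_snd.fst).inter
        (measurableSet_lt measurable_snd.snd measurable_fst.fst)).union
      ((measurableSet_le measurable_fst.fst measurable_snd.fst).inter
        (measurableSet_lt measurable_snd.snd measurable_fst.snd))
  set f : (ℝ × ℝ) → (ℝ × ℝ) → ℝ≥0∞ :=
    fun z st => ({w : (ℝ × ℝ) × (ℝ × ℝ) | w.2 ∈ cset w.1.1 w.1.2}).indicator 1 (z, st) with hf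
  have hmeas : AEMeasurable (Function.uncurry f) (m.prod (wker n)) := by
    have : Function.uncurry f
        = ({w : (ℝ × ℝ) × (ℝ × ℝ) | w.2 ∈ cset w.1.1 w.1.2}).indicator 1 := rfl
    rw [this]
    exact (measurable_one.indicator hbig).aemeasurable
  have h1 : ∀ z : ℝ × ℝ, wker n (cset z.1 z.2) = ∫⁻ st, f z st ∂(wker n) := by
    intro z
    have : (fun st => f z st) = (cset z.1 z.2).indicator 1 := by
      funext st
      simp only [hf]
      by_cases h : st ∈ cset z.1 z.2
      · rw [indicator_of_mem (show (z, st) ∈ {w : (ℝ × ℝ) × (ℝ × ℝ) | w.2 ∈ cset w.1.1 w.1.2} from h),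
          indicator_of_mem h]
        rfl
      · rw [indicator_of_notMem (show (z, st) ∉ {w : (ℝ × ℝ) × (ℝ × ℝ) | w.2 ∈ cset w.1.1 w.1.2} from h),
          indicator_of_notMem h]
    rw [this, lintegral_indicator (measurableSet_cset _ _)]
    simp
  have h2 : ∀ st : ℝ × ℝ, (∫⁻ z, f z st ∂m) = m {z : ℝ × ℝ | st ∈ cset z.1 z.2} := by
    intro st
    have : (fun z => f z st) = ({z : ℝ × ℝ | st ∈ cset z.1 z.2}).indicator 1 := by
      funext z
      simp only [hf]
      by_cases h : st ∈ cset z.1 z.2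
      · rw [indicator_of_mem (show (z, st) ∈ {w : (ℝ × ℝ) × (ℝ × ℝ) | w.2 ∈ cset w.1.1 w.1.2} from h),
          indicator_of_mem (show z ∈ {z : ℝ × ℝ | st ∈ cset z.1 z.2} from h)]
        rfl
      · rw [indicator_of_notMem (show (z, st) ∉ {w : (ℝ × ℝ) × (ℝ × ℝ) | w.2 ∈ cset w.1.1 w.1.2} from h),
          indicator_of_notMem (show z ∉ {z : ℝ × ℝ | st ∈ cset z.1 z.2} from h)]
    rw [this, lintegral_indicator (measurableSet_csection st)]
    simp
  simp_rw [h1]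
  rw [lintegral_lintegral_swap hmeas]
  simp_rw [h2]

lemma coupling_section_ge (p q : Measure ℝ) [IsProbabilityMeasure p] [IsProbabilityMeasure q]
    (ν : Measure (ℝ × ℝ)) (hν1 : ν.map Prod.fst = p) (hν2 : ν.map Prod.snd = q)
    {s t : ℝ} (hst : s ≤ t) :
    (q (Iic s) - p (Iic t)) + (p (Iic s) - q (Iic t))
      ≤ ν {z : ℝ × ℝ | (s, t) ∈ cset z.1 z.2} := by
  have hS1 : MeasurableSet {z : ℝ × ℝ | z.2 ≤ s ∧ t < z.1} :=
    (measurableSet_le measurable_snd measurable_const).inter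
      (measurableSet_lt measurable_const measurable_fst)
  have hS2 : MeasurableSet {z : ℝ × ℝ | z.1 ≤ s ∧ t < z.2} :=
    (measurableSet_le measurable_fst measurable_const).inter
      (measurableSet_lt measurable_const measurable_snd)
  have hset : {z : ℝ × ℝ | (s, t) ∈ cset z.1 z.2}
      = {z : ℝ × ℝ | z.2 ≤ s ∧ t < z.1} ∪ {z : ℝ × ℝ | z.1 ≤ s ∧ t < z.2} := rfl
  have hdisj : Disjoint {z : ℝ × ℝ | z.2 ≤ s ∧ t < z.1} {z : ℝ × ℝ | z.1 ≤ s ∧ t < z.2} := by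
    rw [Set.disjoint_left]
    rintro z ⟨h1, h2⟩ ⟨h3, h4⟩
    linarith
  rw [hset, measure_union hdisj hS2]
  refine add_le_add ?_ ?_
  · rw [← hν2, ← hν1, Measure.map_apply measurable_snd measurableSet_Iic,
      Measure.map_apply measurable_fst measurableSet_Iic, tsub_le_iff_right]
    refine (measure_mono ?_).trans (measure_union_le _ _)
    intro z hz
    by_cases h : t < z.1
    · exact Or.inl ⟨hz, h⟩
    · exact Or.inr (not_lt.1 h)
  · rw [← hν2, ← hν1, Measure.map_apply measurable_snd measurableSet_Iic,
      Measure.map_apply measurable_fst measurableSet_Iic, tsub_le_iff_right]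
    refine (measure_mono ?_).trans (measure_union_le _ _)
    intro z hz
    by_cases h : t < z.2
    · exact Or.inl ⟨hz, h⟩
    · exact Or.inr (not_lt.1 h)

lemma quantile_section_eq (p q : Measure ℝ) [IsProbabilityMeasure p] [IsProbabilityMeasure q]
    {s t : ℝ} (hst : s ≤ t) :
    (Measure.map (fun u => (qf p u, qf q u)) (volume.restrict (Ioo 0 1)))
        {z : ℝ × ℝ | (s, t) ∈ cset z.1 z.2}
      = (q (Iic s) - p (Iic t)) + (p (Iic s) - q (Iic t)) := by
  have hpair : Measurable fun u => (qf p u, qf q u) :=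
    (measurable_qf p).prodMk (measurable_qf q)
  rw [Measure.map_apply hpair (measurableSet_csection _),
    Measure.restrict_apply (hpair (measurableSet_csection _))]
  have key : ∀ u ∈ Ioo (0:ℝ) 1, ((s, t) ∈ cset (qf p u) (qf q u)
      ↔ (cdf p t < u ∧ u ≤ cdf q s) ∨ (cdf q t < u ∧ u ≤ cdf p s)) := by
    intro u hu
    rw [show qf p u = quantile p u from if_pos hu,
      show qf q u = quantile q u from if_pos hu]
    simp only [cset, mem_setOf_eq, quantile_le_iff p hu, quantile_le_iff q hu,
      lt_quantile_iff p hu, lt_quantile_iff q hu]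
    tauto
  have hset : (fun u => (qf p u, qf q u)) ⁻¹' {z : ℝ × ℝ | (s, t) ∈ cset z.1 z.2} ∩ Ioo 0 1
      = (Ioo (0:ℝ) 1 ∩ Ioc (cdf p t) (cdf q s)) ∪ (Ioo (0:ℝ) 1 ∩ Ioc (cdf q t) (cdf p s)) := by
    ext u
    constructor
    · rintro ⟨hm, hu⟩
      rcases (key u hu).1 hm with ⟨h1, h2⟩ | ⟨h1, h2⟩
      · exact Or.inl ⟨hu, h1, h2⟩
      · exact Or.inr ⟨hu, h1, h2⟩
    · rintro (⟨hu, h1, h2⟩ | ⟨hu, h1, h2⟩)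
      · exact ⟨(key u hu).2 (Or.inl ⟨h1, h2⟩), hu⟩
      · exact ⟨(key u hu).2 (Or.inr ⟨h1, h2⟩), hu⟩
  have hdisj : Disjoint (Ioo (0:ℝ) 1 ∩ Ioc (cdf p t) (cdf q s))
      (Ioo (0:ℝ) 1 ∩ Ioc (cdf q t) (cdf p s)) := by
    rw [Set.disjoint_left]
    rintro u ⟨_, h1, h2⟩ ⟨_, h3, h4⟩
    have m1 : cdf p s ≤ cdf p t := monotone_cdf p hst
    have m2 : cdf q s ≤ cdf q t := monotone_cdf q hst
    linarith
  rw [hset, measure_union hdisj (measurableSet_Ioo.inter measurableSet_Ioc),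
    volume_Ioo_inter_Ioc (cdf_nonneg p t) (cdf_le_one q s),
    volume_Ioo_inter_Ioc (cdf_nonneg q t) (cdf_le_one p s),
    ← ofReal_cdf q s, ← ofReal_cdf p t, ← ofReal_cdf p s, ← ofReal_cdf q t,
    ← ENNReal.ofReal_sub _ (cdf_nonneg p t), ← ENNReal.ofReal_sub _ (cdf_nonneg q t)]

lemma cost_eq (m : Measure (ℝ × ℝ)) (n : ℕ) :
    ∫⁻ z, edist z.1 z.2 ^ n ∂m = ∫⁻ z, ENNReal.ofReal (|z.1 - z.2| ^ n) ∂m :=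
  lintegral_congr fun z => by
    rw [edist_dist, Real.dist_eq, ← ENNReal.ofReal_pow (abs_nonneg _)]

lemma qcoupling_cost (p q : Measure ℝ) [IsProbabilityMeasure p] [IsProbabilityMeasure q] (n : ℕ) :
    ∫⁻ z, ENNReal.ofReal (|z.1 - z.2| ^ n)
        ∂(Measure.map (fun u => (qf p u, qf q u)) (volume.restrict (Ioo 0 1)))
      = ∫⁻ t in Ioo (0:ℝ) 1, ENNReal.ofReal (|quantile p t - quantile q t| ^ n) := by
  have hg : Measurable fun z : ℝ × ℝ => ENNReal.ofReal (|z.1 - z.2| ^ n) :=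
    ENNReal.measurable_ofReal.comp ((measurable_fst.sub measurable_snd).abs.pow_const n)
  rw [lintegral_map hg ((measurable_qf p).prodMk (measurable_qf q))]
  refine lintegral_congr_ae ((ae_restrict_mem measurableSet_Ioo).mono fun u hu => ?_)
  show ENNReal.ofReal (|qf p u - qf q u| ^ n) = ENNReal.ofReal (|quantile p u - quantile q u| ^ n)
  rw [show qf p u = quantile p u from if_pos hu, show qf q u = quantile q u from if_pos hu]

/-- The `n`-th power of the `n`-th Wasserstein distance between two probability measures
on `ℝ` with finite `n`-th moments equals the integral over `(0,1)` of the `n`-th power of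
the distance between their quantile functions. -/
theorem wasserstein_eq_integral_quantile (n : ℕ) (hn : 1 ≤ n)
    (p q : Measure ℝ) [IsProbabilityMeasure p] [IsProbabilityMeasure q]
    (hp : ∫⁻ x, (‖x‖₊ : ENNReal) ^ n ∂p ≠ ⊤)
    (hq : ∫⁻ x, (‖x‖₊ : ENNReal) ^ n ∂q ≠ ⊤) :
    sInf ((fun ν => ∫⁻ z, edist z.1 z.2 ^ n ∂ν) '' couplings p q)
      = ∫⁻ t in Ioo (0 : ℝ) 1, ENNReal.ofReal (|quantile p t - quantile q t| ^ n) := by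
  classical
  have hpair : Measurable fun u => (qf p u, qf q u) :=
    (measurable_qf p).prodMk (measurable_qf q)
  set ν₀ : Measure (ℝ × ℝ) :=
    Measure.map (fun u => (qf p u, qf q u)) (volume.restrict (Ioo 0 1)) with hν₀
  haveI : IsProbabilityMeasure (volume.restrict (Ioo (0:ℝ) 1)) := ⟨by simp⟩
  haveI : IsProbabilityMeasure ν₀ := Measure.isProbabilityMeasure_map hpair.aemeasurable
  have hmem : ν₀ ∈ couplings p q := by
    constructor
    · rw [hν₀, Measure.map_map measurable_fst hpair]
      exact map_qf p
    · rw [hν₀, Measure.map_map measurable_snd hpair]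
      exact map_qf q
  have hcost : ∫⁻ z, edist z.1 z.2 ^ n ∂ν₀
      = ∫⁻ t in Ioo (0:ℝ) 1, ENNReal.ofReal (|quantile p t - quantile q t| ^ n) := by
    rw [cost_eq]
    exact qcoupling_cost p q n
  refine le_antisymm (sInf_le ⟨ν₀, hmem, hcost⟩) (le_sInf ?_)
  rintro b ⟨ν, ⟨hν1, hν2⟩, rfl⟩
  haveI : IsProbabilityMeasure ν := by
    constructor
    have : (ν.map Prod.fst) univ = 1 := by rw [hν1]; exact measure_univ
    rwa [Measure.map_apply measurable_fst MeasurableSet.univ, preimage_univ] at this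
  calc ∫⁻ t in Ioo (0:ℝ) 1, ENNReal.ofReal (|quantile p t - quantile q t| ^ n)
      = ∫⁻ z, ENNReal.ofReal (|z.1 - z.2| ^ n) ∂ν₀ := (qcoupling_cost p q n).symm
    _ = ∫⁻ z, wker n (cset z.1 z.2) ∂ν₀ :=
        lintegral_congr fun z => (wker_apply n hn z.1 z.2).symm
    _ = ∫⁻ st, ν₀ {z : ℝ × ℝ | st ∈ cset z.1 z.2} ∂(wker n) := lintegral_wker_cset n ν₀
    _ ≤ ∫⁻ st, ν {z : ℝ × ℝ | st ∈ cset z.1 z.2} ∂(wker n) := by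
        refine lintegral_mono_ae ((wker_ae_le n).mono fun st hst => ?_)
        rw [show ν₀ {z : ℝ × ℝ | st ∈ cset z.1 z.2} = _ from quantile_section_eq p q hst]
        exact coupling_section_ge p q ν hν1 hν2 hst
    _ = ∫⁻ z, wker n (cset z.1 z.2) ∂ν := (lintegral_wker_cset n ν).symm
    _ = ∫⁻ z, edist z.1 z.2 ^ n ∂ν := by
        rw [cost_eq]
        exact lintegral_congr fun z => wker_apply n hn z.1 z.2
end

section
/- Let p and q be atomless probability measures on ℝ with cumulative distribution functions P and Q, and let γ ∈ Γ(p,q) be a coupling with monotone support. Then for every (x, y) ∈ supp(γ), P(x) = Q(y). -/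
open MeasureTheory ProbabilityTheory Set

/-- The (topological) support of a measure: points all of whose open neighbourhoods
have positive measure. -/
def measureSupport {α : Type*} [TopologicalSpace α] [MeasurableSpace α]
    (μ : Measure α) : Set α :=
  {x | ∀ U : Set α, IsOpen U → x ∈ U → 0 < μ U}

lemma measure_compl_measureSupport {α : Type*} [TopologicalSpace α] [MeasurableSpace α]
    [SecondCountableTopology α] (μ : Measure α) : μ (measureSupport μ)ᶜ = 0 := by
  set B := TopologicalSpace.countableBasis α
  set N := ⋃ U ∈ {U ∈ B | μ U = 0}, U
  have hN : μ N = 0 := by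
    refine (measure_biUnion_null_iff ?_).2 (fun U hU => hU.2)
    exact (TopologicalSpace.countable_countableBasis α).mono (fun U hU => hU.1)
  refine measure_mono_null (fun x hx => ?_) hN
  simp only [measureSupport, mem_compl_iff, mem_setOf_eq, not_forall] at hx
  obtain ⟨U, hUo, hxU, hU0⟩ := hx
  push_neg at hU0
  have hU0 : μ U = 0 := le_antisymm hU0 zero_le
  obtain ⟨V, hVB, hxV, hVU⟩ := (TopologicalSpace.isBasis_countableBasis α).exists_subset_of_mem_open hxU hUo
  exact mem_biUnion ⟨hVB, measure_mono_null hVU hU0⟩ hxV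

/-- If `p` and `q` are atomless probability measures on `ℝ` and `γ` is a coupling of
`p` and `q` with monotone support, then the CDFs of `p` and `q` agree on each pair
in the support of `γ`: `P(x) = Q(y)` for `(x, y) ∈ supp(γ)`. -/
theorem cdf_eq_on_monotone_support (p q : Measure ℝ)
    [IsProbabilityMeasure p] [IsProbabilityMeasure q] [NullSingletonClass p] [NullSingletonClass q]
    (γ : Measure (ℝ × ℝ)) (hγ : γ ∈ couplings p q)
    (hmono : ∀ a ∈ measureSupport γ, ∀ b ∈ measureSupport γ, a.1 < b.1 → a.2 ≤ b.2) :
    ∀ z ∈ measureSupport γ, cdf p z.1 = cdf q z.2 := by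
  rintro ⟨x, y⟩ hz
  have hcompl := measure_compl_measureSupport γ
  have key : ∀ (S T : Set (ℝ × ℝ)), measureSupport γ ∩ S ⊆ T → γ S ≤ γ T := by
    intro S T hST
    calc γ S ≤ γ (T ∪ (measureSupport γ)ᶜ) := by
          refine measure_mono (fun a ha => ?_)
          by_cases h : a ∈ measureSupport γ
          · exact Or.inl (hST ⟨h, ha⟩)
          · exact Or.inr h
      _ ≤ γ T + γ (measureSupport γ)ᶜ := measure_union_le _ _
      _ = γ T := by rw [hcompl, add_zero]
  obtain ⟨h1, h2⟩ := hγ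
  have hfst : ∀ s : Set ℝ, MeasurableSet s → γ (s ×ˢ univ) = p s := by
    intro s hs
    rw [← h1, Measure.map_apply measurable_fst hs]
    congr 1
    ext a; simp
  have hsnd : ∀ s : Set ℝ, MeasurableSet s → γ (univ ×ˢ s) = q s := by
    intro s hs
    rw [← h2, Measure.map_apply measurable_snd hs]
    congr 1
    ext a; simp
  have e1 : γ (Iio x ×ˢ univ) ≤ γ (univ ×ˢ Iic y) := by
    refine key _ _ (fun a ⟨ha, haS⟩ => ?_)
    simp only [mem_prod, mem_Iio, mem_univ, and_true] at haS
    exact ⟨mem_univ _, hmono a ha ⟨x, y⟩ hz haS⟩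
  have e2 : γ (univ ×ˢ Iio y) ≤ γ (Iic x ×ˢ univ) := by
    refine key _ _ (fun b ⟨hb, hbS⟩ => ?_)
    simp only [mem_prod, mem_univ, mem_Iio, true_and] at hbS
    refine ⟨?_, mem_univ _⟩
    by_contra h
    rw [mem_Iic, not_le] at h
    exact absurd (hmono ⟨x, y⟩ hz b hb h) (not_le.2 hbS)
  have pIio : γ (Iio x ×ˢ univ) = p (Iic x) := by
    rw [hfst _ measurableSet_Iio, measure_congr Iio_ae_eq_Iic]
  have pIic : γ (Iic x ×ˢ univ) = p (Iic x) := hfst _ measurableSet_Iic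
  have qIio : γ (univ ×ˢ Iio y) = q (Iic y) := by
    rw [hsnd _ measurableSet_Iio, measure_congr Iio_ae_eq_Iic]
  have qIic : γ (univ ×ˢ Iic y) = q (Iic y) := hsnd _ measurableSet_Iic
  have : p (Iic x) = q (Iic y) := by
    rw [← pIio, ← qIic]
    refine le_antisymm e1 ?_
    rw [qIic, ← qIio, pIio, ← pIic]
    exact e2
  rw [cdf_eq_real, cdf_eq_real, measureReal_def, measureReal_def, this]
end
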